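/- arXiv:1005.2102 — 4 statements merged into one kernel-verified Lean document; each statement's English description precedes it below -/
import Mathlib

section
/- With fb as above, the identities χ₁π̄₁(c̃₁κ̄₁ - c̃₃π̄₁) = fb(c̃₄(c̃₁κ̄₁ - c̃₃π̄₁)) and χ₁κ̄₁(c̃₁κ̄₁ - c̃₃π̄₁) = fb(c̃₂(c̃₁κ̄₁ - c̃₃π̄₁)) hold. -/
/-- Identities (4D61a) for the odd differential `fb`
(with `c̃₁,…,c̃₄ = c 0,…,c 3` and `ψ₁, π̄₁, χ₁, κ̄₁ = ψ, π, χ, κ`):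
`χ₁π̄₁(c̃₁κ̄₁ - c̃₃π̄₁) = fb (c̃₄(c̃₁κ̄₁ - c̃₃π̄₁))` and
`χ₁κ̄₁(c̃₁κ̄₁ - c̃₃π̄₁) = fb (c̃₂(c̃₁κ̄₁ - c̃₃π̄₁))`. -/
theorem stmt_7 {A : Type*} [Ring A] [Algebra ℂ A]
    (σ : A →ₐ[ℂ] A) (fb : A →ₗ[ℂ] A)
    (c : Fin 4 → A) (ψ π χ κ : A)
    (hLeib : ∀ x y, fb (x * y) = fb x * y + σ x * fb y)
    (hσc : ∀ i, σ (c i) = - c i)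
    (hσψ : σ ψ = ψ) (hσπ : σ π = π) (hσχ : σ χ = χ) (hσκ : σ κ = κ)
    (hanti : ∀ i j, c i * c j = -(c j * c i))
    (hcomm : ∀ x ∈ ({ψ, π, χ, κ} : Set A), ∀ y ∈ ({ψ, π, χ, κ} : Set A), x * y = y * x)
    (hce : ∀ i, ∀ x ∈ ({ψ, π, χ, κ} : Set A), c i * x = x * c i)
    (hfb0 : fb (c 0) = ψ * π) (hfb1 : fb (c 1) = χ * κ)
    (hfb2 : fb (c 2) = ψ * κ) (hfb3 : fb (c 3) = χ * π)
    (hfbψ : fb ψ = 0) (hfbπ : fb π = 0) (hfbχ : fb χ = 0) (hfbκ : fb κ = 0) :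
    χ * π * (c 0 * κ - c 2 * π) = fb (c 3 * (c 0 * κ - c 2 * π)) ∧
    χ * κ * (c 0 * κ - c 2 * π) = fb (c 1 * (c 0 * κ - c 2 * π)) := by
  have hπκ : π * κ = κ * π := hcomm π (by simp) κ (by simp)
  have hX : fb (c 0 * κ - c 2 * π) = 0 := by
    rw [map_sub, hLeib, hLeib, hfb0, hfb2, hfbκ, hfbπ, mul_zero, mul_zero,
      add_zero, add_zero, mul_assoc, mul_assoc, hπκ, sub_self]
  constructor
  · rw [hLeib, hX, mul_zero, add_zero, hfb3]
  · rw [hLeib, hX, mul_zero, add_zero, hfb1]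
end

section
/- With fb as above, 2χ₁(c̃₁κ̄₁ - c̃₃π̄₁) = (c̃₁χ₁κ̄₁ - c̃₃χ₁π̄₁ + c̃₂ψ₁π̄₁ - c̃₄ψ₁κ̄₁) + fb(c̃₃c̃₄ - c̃₁c̃₂). In particular, the cocycle 2χ₁(c̃₁κ̄₁ - c̃₃π̄₁) is cohomologous to the invariant cocycle c̃₁χ₁κ̄₁ - c̃₃χ₁π̄₁ + c̃₂ψ₁π̄₁ - c̃₄ψ₁κ̄₁. -/
/-- Identity (4D61b):
`2χ₁(c̃₁κ̄₁ - c̃₃π̄₁) = (c̃₁χ₁κ̄₁ - c̃₃χ₁π̄₁ + c̃₂ψ₁π̄₁ - c̃₄ψ₁κ̄₁) + fb (c̃₃c̃₄ - c̃₁c̃₂)`,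
so the cocycle `2χ₁(c̃₁κ̄₁ - c̃₃π̄₁)` is cohomologous to the invariant cocycle
`c̃₁χ₁κ̄₁ - c̃₃χ₁π̄₁ + c̃₂ψ₁π̄₁ - c̃₄ψ₁κ̄₁`. -/
theorem stmt_8 {A : Type*} [Ring A] [Algebra ℂ A]
    (σ : A →ₐ[ℂ] A) (fb : A →ₗ[ℂ] A)
    (c : Fin 4 → A) (ψ π χ κ : A)
    (hLeib : ∀ x y, fb (x * y) = fb x * y + σ x * fb y)
    (hσc : ∀ i, σ (c i) = - c i)
    (hσψ : σ ψ = ψ) (hσπ : σ π = π) (hσχ : σ χ = χ) (hσκ : σ κ = κ)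
    (hanti : ∀ i j, c i * c j = -(c j * c i))
    (hcomm : ∀ x ∈ ({ψ, π, χ, κ} : Set A), ∀ y ∈ ({ψ, π, χ, κ} : Set A), x * y = y * x)
    (hce : ∀ i, ∀ x ∈ ({ψ, π, χ, κ} : Set A), c i * x = x * c i)
    (hfb0 : fb (c 0) = ψ * π) (hfb1 : fb (c 1) = χ * κ)
    (hfb2 : fb (c 2) = ψ * κ) (hfb3 : fb (c 3) = χ * π)
    (hfbψ : fb ψ = 0) (hfbπ : fb π = 0) (hfbχ : fb χ = 0) (hfbκ : fb κ = 0) :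
    (2 : ℂ) • (χ * (c 0 * κ - c 2 * π)) =
      (c 0 * (χ * κ) - c 2 * (χ * π) + c 1 * (ψ * π) - c 3 * (ψ * κ)) +
        fb (c 2 * c 3 - c 0 * c 1) := by
  have mψ : ψ ∈ ({ψ, π, χ, κ} : Set A) := by simp
  have mπ : π ∈ ({ψ, π, χ, κ} : Set A) := by simp
  have mχ : χ ∈ ({ψ, π, χ, κ} : Set A) := by simp
  have mκ : κ ∈ ({ψ, π, χ, κ} : Set A) := by simp
  have h1 : χ * (c 0 * κ) = c 0 * (χ * κ) := by
    rw [← mul_assoc, ← hce 0 χ mχ, mul_assoc]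
  have h2 : χ * (c 2 * π) = c 2 * (χ * π) := by
    rw [← mul_assoc, ← hce 2 χ mχ, mul_assoc]
  have h3 : ψ * κ * c 3 = c 3 * (ψ * κ) := by
    rw [mul_assoc, ← hce 3 κ mκ, ← mul_assoc, ← hce 3 ψ mψ, mul_assoc]
  have h4 : ψ * π * c 1 = c 1 * (ψ * π) := by
    rw [mul_assoc, ← hce 1 π mπ, ← mul_assoc, ← hce 1 ψ mψ, mul_assoc]
  rw [map_sub, hLeib, hLeib, hfb2, hfb3, hfb0, hfb1, hσc 2, hσc 0, mul_sub, h1, h2, h3, h4]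
  simp only [neg_mul]
  module
end

section
/- With D₁, D₂ as in Lemma 4D1, every D₁- and D₂-closed element of c-degree 3 or 4 in Ω⁻ vanishes: if ω = Σ c̃ₐc̃_bc̃_c f_{abc}(π̄₁,κ̄₁) (degree 3 in the c̃) or ω = c̃₁c̃₂c̃₃c̃₄ f(π̄₁,κ̄₁) (degree 4), and D₁ω = D₂ω = 0, then ω = 0. -/
open MvPolynomial

set_option maxHeartbeats 1000000
set_option synthInstance.maxHeartbeats 400000

/-- The ℂ-algebra of polynomials in the two even ghost variables
`π̄₁ = X 0`, `κ̄₁ = X 1`. -/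
noncomputable abbrev SAC.R2 : Type := MvPolynomial (Fin 2) ℂ

/-- `Ω⁻`: the free graded-commutative algebra on the four odd translation
ghosts over `ℂ[π̄₁, κ̄₁]`, realized as the exterior algebra of the free module
of rank 4. -/
noncomputable abbrev SAC.Omega : Type := ExteriorAlgebra SAC.R2 (Fin 4 → SAC.R2)

/-- The odd translation ghosts `c̃₁, c̃₂, c̃₃, c̃₄ = ctil 0, …, ctil 3`. -/
noncomputable def SAC.ctil (i : Fin 4) : SAC.Omega :=
  ExteriorAlgebra.ι SAC.R2 (Pi.single i 1)

/-- The linear functional on the rank-4 free module determined by the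
coefficient vector `w`. -/
noncomputable def SAC.dual (w : Fin 4 → SAC.R2) :
    Module.Dual SAC.R2 (Fin 4 → SAC.R2) :=
  LinearMap.lsum SAC.R2 (fun _ : Fin 4 => SAC.R2) SAC.R2
    (fun i => LinearMap.toSpanSingleton SAC.R2 SAC.R2 (w i))

/-- `D₁ = π̄₁ ∂/∂c̃₁ + κ̄₁ ∂/∂c̃₃`, as the odd derivation (interior product)
contracting with the functional `c̃₁ ↦ π̄₁, c̃₃ ↦ κ̄₁`. -/
noncomputable def SAC.D1 : SAC.Omega →ₗ[SAC.R2] SAC.Omega :=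
  CliffordAlgebra.contractLeft (Q := (0 : QuadraticForm SAC.R2 (Fin 4 → SAC.R2)))
    (SAC.dual ![X 0, 0, X 1, 0])

/-- `D₂ = κ̄₁ ∂/∂c̃₂ + π̄₁ ∂/∂c̃₄`. -/
noncomputable def SAC.D2 : SAC.Omega →ₗ[SAC.R2] SAC.Omega :=
  CliffordAlgebra.contractLeft (Q := (0 : QuadraticForm SAC.R2 (Fin 4 → SAC.R2)))
    (SAC.dual ![0, X 1, 0, X 0])

namespace SAC

lemma dual_single (w : Fin 4 → R2) (k : Fin 4) : dual w (Pi.single k 1) = w k := by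
  simp [dual, LinearMap.lsum_apply, Fin.sum_univ_four, Pi.single_apply]
  fin_cases k <;> simp

noncomputable def ctr (w : Fin 4 → R2) : Omega →ₗ[R2] Omega :=
  CliffordAlgebra.contractLeft (Q := (0 : QuadraticForm SAC.R2 (Fin 4 → SAC.R2))) (dual w)

lemma ctr_ctil (w : Fin 4 → R2) (i : Fin 4) :
    ctr w (ctil i) = algebraMap R2 Omega (w i) := by
  rw [ctr, ctil, CliffordAlgebra.contractLeft_ι, dual_single]

lemma ctr_ctil_mul (w : Fin 4 → R2) (i : Fin 4) (x : Omega) :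
    ctr w (ctil i * x) = w i • x - ctil i * ctr w x := by
  rw [ctr, ctil, CliffordAlgebra.contractLeft_ι_mul, dual_single]

lemma ctr_algebraMap (w : Fin 4 → R2) (r : R2) : ctr w (algebraMap R2 Omega r) = 0 := by
  rw [ctr]
  exact CliffordAlgebra.contractLeft_algebraMap
    (Q := (0 : QuadraticForm SAC.R2 (Fin 4 → SAC.R2))) (d := dual w) r

lemma A_ctil (i : Fin 4) : ExteriorAlgebra.algebraMapInv (ctil i) = 0 := by
  simp [ctil, ExteriorAlgebra.algebraMapInv]

lemma A_algebraMap (r : R2) : ExteriorAlgebra.algebraMapInv (algebraMap R2 Omega r) = r :=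
  ExteriorAlgebra.algebraMap_leftInverse _ r

lemma D1_eq : D1 = ctr ![X 0, 0, X 1, 0] := rfl
lemma D2_eq : D2 = ctr ![0, X 1, 0, X 0] := rfl

lemma ctil_sq (i : Fin 4) : ctil i * ctil i = 0 := ExteriorAlgebra.ι_sq_zero _

lemma ctil_sq' (i : Fin 4) (x : Omega) : ctil i * (ctil i * x) = 0 := by
  rw [← mul_assoc, ctil_sq, zero_mul]

lemma ctil_swap (i j : Fin 4) : ctil j * ctil i = -(ctil i * ctil j) :=
  eq_neg_of_add_eq_zero_right (ExteriorAlgebra.ι_add_mul_swap _ _)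

lemma ctil_swap' (i j : Fin 4) (x : Omega) :
    ctil j * (ctil i * x) = -(ctil i * (ctil j * x)) := by
  rw [← mul_assoc, ctil_swap, neg_mul, mul_assoc]

lemma s10 : ctil 1 * ctil 0 = -(ctil 0 * ctil 1) := ctil_swap 0 1
lemma s20 : ctil 2 * ctil 0 = -(ctil 0 * ctil 2) := ctil_swap 0 2
lemma s30 : ctil 3 * ctil 0 = -(ctil 0 * ctil 3) := ctil_swap 0 3
lemma s21 : ctil 2 * ctil 1 = -(ctil 1 * ctil 2) := ctil_swap 1 2
lemma s31 : ctil 3 * ctil 1 = -(ctil 1 * ctil 3) := ctil_swap 1 3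
lemma s32 : ctil 3 * ctil 2 = -(ctil 2 * ctil 3) := ctil_swap 2 3
lemma s10' (x : Omega) : ctil 1 * (ctil 0 * x) = -(ctil 0 * (ctil 1 * x)) := ctil_swap' 0 1 x
lemma s20' (x : Omega) : ctil 2 * (ctil 0 * x) = -(ctil 0 * (ctil 2 * x)) := ctil_swap' 0 2 x
lemma s30' (x : Omega) : ctil 3 * (ctil 0 * x) = -(ctil 0 * (ctil 3 * x)) := ctil_swap' 0 3 x
lemma s21' (x : Omega) : ctil 2 * (ctil 1 * x) = -(ctil 1 * (ctil 2 * x)) := ctil_swap' 1 2 x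
lemma s31' (x : Omega) : ctil 3 * (ctil 1 * x) = -(ctil 1 * (ctil 3 * x)) := ctil_swap' 1 3 x
lemma s32' (x : Omega) : ctil 3 * (ctil 2 * x) = -(ctil 2 * (ctil 3 * x)) := ctil_swap' 2 3 x

end SAC

open SAC

/-- every `D₁`- and `D₂`-closed element of c-degree 3 or 4 in
`Ω⁻` vanishes. -/
theorem stmt_11 (ω : SAC.Omega)
    (hdeg :
      (∃ f : Fin 4 → Fin 4 → Fin 4 → SAC.R2,
        ω = ∑ a, ∑ b, ∑ c', f a b c' • (SAC.ctil a * SAC.ctil b * SAC.ctil c')) ∨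
      (∃ f : SAC.R2,
        ω = f • (SAC.ctil 0 * SAC.ctil 1 * SAC.ctil 2 * SAC.ctil 3)))
    (h1 : SAC.D1 ω = 0) (h2 : SAC.D2 ω = 0) :
    ω = 0 := by
  rcases hdeg with h3 | h4
  · obtain ⟨f, rfl⟩ := h3
    rw [D1_eq] at h1
    rw [D2_eq] at h2
    set g0 : R2 := f 0 1 2 - f 0 2 1 - f 1 0 2 + f 1 2 0 + f 2 0 1 - f 2 1 0 with hg0
    set g1 : R2 := f 0 1 3 - f 0 3 1 - f 1 0 3 + f 1 3 0 + f 3 0 1 - f 3 1 0 with hg1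
    set g2 : R2 := f 0 2 3 - f 0 3 2 - f 2 0 3 + f 2 3 0 + f 3 0 2 - f 3 2 0 with hg2
    set g3 : R2 := f 1 2 3 - f 1 3 2 - f 2 1 3 + f 2 3 1 + f 3 1 2 - f 3 2 1 with hg3
    have hω : (∑ a, ∑ b, ∑ c', f a b c' • (SAC.ctil a * SAC.ctil b * SAC.ctil c'))
        = g0 • (ctil 0 * (ctil 1 * ctil 2)) + g1 • (ctil 0 * (ctil 1 * ctil 3))
          + g2 • (ctil 0 * (ctil 2 * ctil 3)) + g3 • (ctil 1 * (ctil 2 * ctil 3)) := by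
      simp only [Fin.sum_univ_four, mul_assoc, ctil_sq, ctil_sq', s10, s20, s30, s21, s31, s32,
        s10', s20', s30', s21', s31', s32', smul_neg, smul_zero, mul_zero, mul_neg, zero_mul,
        neg_neg, hg0, hg1, hg2, hg3]
      module
    rw [hω] at h1 h2 ⊢
    have e0 := congrArg (fun x => ExteriorAlgebra.algebraMapInv
      (ctr (Pi.single 0 1) (ctr (Pi.single 1 1) x))) h1
    have e2 := congrArg (fun x => ExteriorAlgebra.algebraMapInv
      (ctr (Pi.single 2 1) (ctr (Pi.single 3 1) x))) h1
    have e1 := congrArg (fun x => ExteriorAlgebra.algebraMapInv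
      (ctr (Pi.single 0 1) (ctr (Pi.single 1 1) x))) h2
    have e3 := congrArg (fun x => ExteriorAlgebra.algebraMapInv
      (ctr (Pi.single 1 1) (ctr (Pi.single 2 1) x))) h2
    simp [map_smul, map_zero, ctr_ctil_mul, ctr_ctil, ctr_algebraMap,
      map_sub, map_add, map_mul, A_ctil, A_algebraMap, smul_sub, smul_smul, mul_zero, zero_mul,
      smul_zero, sub_zero, zero_sub, zero_smul, Matrix.cons_val_zero, Matrix.cons_val_one,
      Matrix.head_cons, Matrix.cons_val_two, Matrix.tail_cons, Matrix.cons_val_three,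
      smul_eq_mul, mul_one, one_mul, neg_zero, sub_self, map_neg, mul_smul_comm,
      Pi.single_apply] at e0 e1 e2 e3
    rw [e0, e1, e2, e3]
    simp
  · obtain ⟨f, rfl⟩ := h4
    rw [D1_eq] at h1
    have e := congrArg (fun x => ExteriorAlgebra.algebraMapInv
      (SAC.ctr (Pi.single 1 1) (SAC.ctr (Pi.single 2 1) (SAC.ctr (Pi.single 3 1) x)))) h1
    simp [map_smul, map_zero, mul_assoc, SAC.ctr_ctil_mul, SAC.ctr_ctil, SAC.ctr_algebraMap,
      map_sub, map_add, map_mul, SAC.A_ctil, SAC.A_algebraMap, smul_sub, smul_smul, mul_zero,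
      zero_mul, smul_zero, sub_zero, zero_sub, zero_smul, Matrix.cons_val_zero, Matrix.cons_val_one,
      Matrix.head_cons, Matrix.cons_val_two, Matrix.tail_cons, Matrix.cons_val_three,
      smul_eq_mul, mul_one, one_mul, neg_zero, sub_self, map_neg, mul_smul_comm,
      Pi.single_apply] at e
    rw [e, zero_smul]
end

section
/- For N > 2, fb(Θ₁₁ - Σ_{i=2}^{N} Θᵢᵢ) = 2i Σ_{i=2}^{N} Σ_{j=2}^{N} (ξᵢ⁺·ξⱼ⁺)(ξᵢ⁻·ξⱼ⁻). In particular, the right-hand side is a nonzero polynomial purely in the ghosts ξ₂,…,ξ_N which is nevertheless fb-exact. -/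
theorem stmt_16_aux {A : Type*} [Ring A] [Algebra ℂ A] (N : ℕ)
    (fb : A →ₗ[ℂ] A)
    (dm dp : Fin N → Fin N → A) (Θ : Fin N → Fin N → A)
    (hdm : ∀ i j, dm i j = -(dm j i)) (hdp : ∀ i j, dp i j = -(dp j i))
    (hcomm : ∀ i j k l, dm i j * dp k l = dp k l * dm i j)
    (hΘ : ∀ i j, fb (Θ i j) = (-(2 * Complex.I)) • ∑ k, dm i k * dp j k)
    (a : Fin N) :
    fb (Θ a a - ∑ i ∈ Finset.univ.erase a, Θ i i) =
      (2 * Complex.I) •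
        ∑ i ∈ Finset.univ.erase a, ∑ j ∈ Finset.univ.erase a,
          dp i j * dm i j := by
  have h00 : dm a a = 0 := by
    have h := hdm a a
    have h2 : (2 : ℂ) • dm a a = 0 := by
      rw [two_smul]; nth_rewrite 1 [h]; exact neg_add_cancel _
    have h3 : dm a a = ((2 : ℂ)⁻¹) • ((2 : ℂ) • dm a a) := by
      rw [smul_smul]; norm_num
    rw [h3, h2, smul_zero]
  have key : ∀ i j : Fin N, dp i j * dm i j = dm i j * dp i j :=
    fun i j => (hcomm i j i j).symm
  rw [map_sub, map_sum]
  simp only [hΘ, key]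
  rw [← Finset.smul_sum, ← smul_sub,
    show (2 * Complex.I : ℂ) = -(-(2 * Complex.I)) by ring, neg_smul, ← smul_neg]
  congr 1
  have hA : ∑ k, dm a k * dp a k = ∑ k ∈ Finset.univ.erase a, dm a k * dp a k := by
    rw [← Finset.add_sum_erase _ _ (Finset.mem_univ a), h00, zero_mul, zero_add]
  have hB : ∀ i : Fin N, ∑ k, dm i k * dp i k
      = dm a i * dp a i + ∑ k ∈ Finset.univ.erase a, dm i k * dp i k := by
    intro i
    rw [← Finset.add_sum_erase _ _ (Finset.mem_univ a), hdm i a, hdp i a, neg_mul_neg]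
  rw [hA]
  simp only [hB]
  rw [Finset.sum_add_distrib, sub_add_eq_sub_sub, sub_self, zero_sub, neg_neg]

/-- for `N > 2`, with `fb Θᵢⱼ = -2i Σ_k (ξᵢ⁻·ξₖ⁻)(ξⱼ⁺·ξₖ⁺)`,
antisymmetry of the products and commutativity of the even elements,
`fb (Θ₁₁ - Σ_{i=2}^{N} Θᵢᵢ) = 2i Σ_{i=2}^{N} Σ_{j=2}^{N} (ξᵢ⁺·ξⱼ⁺)(ξᵢ⁻·ξⱼ⁻)`:
a polynomial purely in the ghosts `ξ₂, …, ξ_N` which is `fb`-exact.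
(Index `1` is `0`; the sum over `i = 2, …, N` is over `i ≠ 0`.) -/
theorem stmt_16 {A : Type*} [Ring A] [Algebra ℂ A] (N : ℕ) (hN : 2 < N)
    (fb : A →ₗ[ℂ] A)
    (dm dp : Fin N → Fin N → A) (Θ : Fin N → Fin N → A)
    (hdm : ∀ i j, dm i j = -(dm j i)) (hdp : ∀ i j, dp i j = -(dp j i))
    (hcomm : ∀ i j k l, dm i j * dp k l = dp k l * dm i j)
    (hΘ : ∀ i j, fb (Θ i j) = (-(2 * Complex.I)) • ∑ k, dm i k * dp j k) :
    fb (Θ ⟨0, by omega⟩ ⟨0, by omega⟩ - ∑ i ∈ Finset.univ.erase ⟨0, by omega⟩, Θ i i) =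
      (2 * Complex.I) •
        ∑ i ∈ Finset.univ.erase ⟨0, by omega⟩, ∑ j ∈ Finset.univ.erase ⟨0, by omega⟩,
          dp i j * dm i j := by
  exact stmt_16_aux N fb dm dp Θ hdm hdp hcomm hΘ ⟨0, by omega⟩
end
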